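/- Let I be a real interval of length ≥ 2 and let f be of class C² on I. If |f(x)| ≤ 1 and |f″(x)| ≤ 1 for all x ∈ I, then |f′(x)| ≤ 2 for all x ∈ I. -/

import Mathlib

open Set intervalIntegral

lemma aux_one_sided (a b : ℝ) (hab : 2 ≤ b - a)
    (f : ℝ → ℝ) (hf : ContDiffOn ℝ 2 f (Set.Icc a b))
    (hf0 : ∀ x ∈ Set.Icc a b, |f x| ≤ 1)
    (hf2 : ∀ x ∈ Set.Icc a b, |iteratedDerivWithin 2 f (Set.Icc a b) x| ≤ 1) :
    ∀ x ∈ Set.Icc a b, derivWithin f (Set.Icc a b) x ≤ 2 := by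
  intro x hx
  have hab' : a < b := by linarith
  have hud : UniqueDiffOn ℝ (Set.Icc a b) := uniqueDiffOn_Icc hab'
  set g := derivWithin f (Set.Icc a b) with hg
  -- g is C¹ on Icc a b
  have hg1 : ContDiffOn ℝ 1 g (Set.Icc a b) := hf.derivWithin hud (by norm_num)
  have hgdiff : DifferentiableOn ℝ g (Set.Icc a b) := hg1.differentiableOn one_ne_zero
  have hgcont : ContinuousOn g (Set.Icc a b) := hg1.continuousOn
  -- g is 1-Lipschitz
  have hlip : ∀ t ∈ Set.Icc a b, |g t - g x| ≤ |t - x| := by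
    intro t ht
    have := (convex_Icc a b).norm_image_sub_le_of_norm_derivWithin_le hgdiff
      (C := 1) (fun y hy => by
        have : derivWithin g (Set.Icc a b) y = iteratedDerivWithin 2 f (Set.Icc a b) y := by
          rw [show (2 : ℕ) = 1 + 1 from rfl, iteratedDerivWithin_succ]
          exact derivWithin_congr (fun z hz => congrFun (iteratedDerivWithin_one (f := f)).symm z)
            (congrFun (iteratedDerivWithin_one (f := f)).symm y)
        rw [Real.norm_eq_abs, this]
        exact hf2 y hy) hx ht
    simpa using this
  -- choose c with Icc c (c+2) ⊆ Icc a b and x ∈ Icc c (c+2)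
  set c := min x (b - 2) with hc
  have hca : a ≤ c := le_min hx.1 (by linarith)
  have hcx : c ≤ x := min_le_left _ _
  have hxc2 : x ≤ c + 2 := by
    rcases min_cases x (b - 2) with ⟨h, _⟩ | ⟨h, _⟩ <;> simp [hc, h] <;> linarith [hx.2]
  have hc2b : c + 2 ≤ b := by
    have := min_le_right x (b - 2); linarith
  by_contra hcon
  push_neg at hcon
  -- lower bound for g on Icc a b
  have hglb : ∀ t ∈ Set.Icc a b, g x - |t - x| ≤ g t := by
    intro t ht
    have := hlip t ht
    have := abs_le.1 this
    linarith [neg_abs_le (g t - g x), this.1]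
  -- FTC on subintervals
  have hsub : ∀ u v : ℝ, a ≤ u → v ≤ b → u ≤ v →
      f v - f u = ∫ t in u..v, g t := by
    intro u v hau hvb huv
    symm
    apply intervalIntegral.integral_eq_sub_of_hasDeriv_right_of_le huv
      (hf.continuousOn.mono (Icc_subset_Icc hau hvb))
      (fun t ht => by
        have htab : t ∈ Set.Ioo a b := ⟨lt_of_le_of_lt hau ht.1, lt_of_lt_of_le ht.2 hvb⟩
        have hmem : Set.Icc a b ∈ nhds t :=
          mem_nhds_iff.2 ⟨Set.Ioo a b, Set.Ioo_subset_Icc_self, isOpen_Ioo, htab⟩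
        have hd : DifferentiableWithinAt ℝ f (Set.Icc a b) t :=
          (hf.differentiableOn (by norm_num)) t (Set.Ioo_subset_Icc_self htab)
        exact ((hd.hasDerivWithinAt.hasDerivAt hmem).hasDerivWithinAt))
      ((hgcont.mono (Icc_subset_Icc hau hvb)).intervalIntegrable_of_Icc huv)
  -- integral comparison on Icc u v
  have hcomp : ∀ u v : ℝ, a ≤ u → v ≤ b → u ≤ v →
      (∫ t in u..v, g x - |t - x|) ≤ ∫ t in u..v, g t := by
    intro u v hau hvb huv
    apply intervalIntegral.integral_mono_on huv
    · apply IntervalIntegrable.sub intervalIntegrable_const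
      exact ((continuous_abs.comp (continuous_id.sub continuous_const)).continuousOn).intervalIntegrable_of_Icc huv
    · exact (hgcont.mono (Icc_subset_Icc hau hvb)).intervalIntegrable_of_Icc huv
    · intro t ht
      exact hglb t ⟨le_trans hau ht.1, le_trans ht.2 hvb⟩
  -- compute the two integrals
  have hI1 : (∫ t in c..x, g x - |t - x|) = g x * (x - c) - (x - c) ^ 2 / 2 := by
    have : ∀ t ∈ Set.uIcc c x, g x - |t - x| = g x - (x - t) := by
      intro t ht
      rw [Set.uIcc_of_le hcx] at ht
      rw [abs_of_nonpos (by linarith [ht.2])]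
      ring
    rw [intervalIntegral.integral_congr this]
    rw [intervalIntegral.integral_sub intervalIntegrable_const
      (IntervalIntegrable.sub intervalIntegrable_const (intervalIntegrable_id))]
    rw [intervalIntegral.integral_sub intervalIntegrable_const intervalIntegrable_id]
    simp [integral_id]
    ring
  have hI2 : (∫ t in x..(c + 2), g x - |t - x|) = g x * (c + 2 - x) - (c + 2 - x) ^ 2 / 2 := by
    have : ∀ t ∈ Set.uIcc x (c + 2), g x - |t - x| = g x - (t - x) := by
      intro t ht
      rw [Set.uIcc_of_le hxc2] at ht
      rw [abs_of_nonneg (by linarith [ht.1])]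
    rw [intervalIntegral.integral_congr this]
    rw [intervalIntegral.integral_sub intervalIntegrable_const
      (IntervalIntegrable.sub intervalIntegrable_id intervalIntegrable_const)]
    rw [intervalIntegral.integral_sub intervalIntegrable_id intervalIntegrable_const]
    simp [integral_id]
    ring
  have h1 : g x * (x - c) - (x - c) ^ 2 / 2 ≤ f x - f c := by
    rw [hsub c x hca (le_trans hxc2 hc2b) hcx, ← hI1]
    exact hcomp c x hca (le_trans hxc2 hc2b) hcx
  have h2 : g x * (c + 2 - x) - (c + 2 - x) ^ 2 / 2 ≤ f (c + 2) - f x := by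
    rw [hsub x (c + 2) hx.1 hc2b hxc2, ← hI2]
    exact hcomp x (c + 2) hx.1 hc2b hxc2
  have hbd : f (c + 2) - f c ≤ 2 := by
    have h3 := abs_le.1 (hf0 c ⟨hca, by linarith⟩)
    have h4 := abs_le.1 (hf0 (c + 2) ⟨by linarith, hc2b⟩)
    linarith [h3.1, h4.2]
  -- (x-c)² + (c+2-x)² ≤ 4
  have hsq : (x - c) ^ 2 + (c + 2 - x) ^ 2 ≤ 4 := by nlinarith [hcx, hxc2]
  nlinarith [hcx, hxc2, hcon]

theorem stmt_8 (a b : ℝ) (hab : 2 ≤ b - a)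
    (f : ℝ → ℝ) (hf : ContDiffOn ℝ 2 f (Set.Icc a b))
    (hf0 : ∀ x ∈ Set.Icc a b, |f x| ≤ 1)
    (hf2 : ∀ x ∈ Set.Icc a b, |iteratedDerivWithin 2 f (Set.Icc a b) x| ≤ 1) :
    ∀ x ∈ Set.Icc a b, |derivWithin f (Set.Icc a b) x| ≤ 2 := by
  intro x hx
  have hab' : a < b := by linarith
  have hud : UniqueDiffOn ℝ (Set.Icc a b) := uniqueDiffOn_Icc hab'
  rw [abs_le]
  constructor
  · have := aux_one_sided a b hab (-f) hf.neg
      (fun y hy => by simpa using hf0 y hy)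
      (fun y hy => by
        rw [iteratedDerivWithin_neg (f := f)]
        simpa using hf2 y hy) x hx
    rw [show (-f : ℝ → ℝ) = fun y => -f y from rfl] at this
    rw [show (fun y => -f y) = -f from rfl, derivWithin.neg] at this
    linarith
  · exact aux_one_sided a b hab f hf hf0 hf2 x hx
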